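/- Let (x, y, z) ∈ ℝ³ with ρ² := x² + y² > 0 and z ≠ 0, and set β := (ρ²·β₃ + z²·β₁)/(ρ² + z²). Then β satisfies ρ²/(β − β₁) + z²/(β − β₃) = 0 with β₃ < β < β₁, and 1/( |β − β₁| · √(β − β₃) · ( ρ²/(β − β₁)² + z²/(β − β₃)² ) ) = √(β₁ − β₃) · |z| / (ρ² + z²)^{3/2}. (This is the C = 0 case of the BGPP harmonic function with β₁ = β₂: H is a constant multiple of z/r³, so it does not have a simple pole and gives no multi-centred solution.) -/
import Mathlib


open Real

lemma bgpp_key (a A w S : ℝ) (ha : 0 < a) (hA : 0 < A) (hw : 0 < w) (hS : 0 < S)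
    (hrel : S ^ 2 = a + w ^ 2) :
    1 / (a * A ^ 2 / S ^ 2 * (w * A / S) *
        (a / (-(a * A ^ 2 / S ^ 2)) ^ 2 + w ^ 2 / (w ^ 2 * A ^ 2 / S ^ 2) ^ 2))
      = A * w / S ^ 3 := by
  have h : a = S ^ 2 - w ^ 2 := by linarith
  subst h
  have h1 : S ^ 2 - w ^ 2 ≠ 0 := ne_of_gt ha
  field_simp
  ring

/-- **The `C = 0` case of the degenerate BGPP harmonic function.**
For `β₃ < β₁`, a point `(x, y, z)` with `ρ² = x² + y² > 0` and `z ≠ 0`, and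
`β = (ρ² β₃ + z² β₁)/(ρ² + z²)`, one has `ρ²/(β − β₁) + z²/(β − β₃) = 0` with
`β₃ < β < β₁`, and the harmonic function equals `√(β₁ − β₃) |z| / (ρ² + z²)^{3/2}`,
a constant multiple of `z/r³`, so it has no simple pole. -/
theorem bgpp_degenerate_C_zero
    (β₃ β₁ : ℝ) (h31 : β₃ < β₁)
    (x y z : ℝ) (hρ : 0 < x ^ 2 + y ^ 2) (hz : z ≠ 0)
    (β : ℝ) (hβ : β = ((x ^ 2 + y ^ 2) * β₃ + z ^ 2 * β₁) / ((x ^ 2 + y ^ 2) + z ^ 2)) :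
    (x ^ 2 + y ^ 2) / (β - β₁) + z ^ 2 / (β - β₃) = 0
    ∧ β₃ < β ∧ β < β₁
    ∧ 1 / (|β - β₁| * Real.sqrt (β - β₃) *
          ((x ^ 2 + y ^ 2) / (β - β₁) ^ 2 + z ^ 2 / (β - β₃) ^ 2))
        = Real.sqrt (β₁ - β₃) * |z| / ((x ^ 2 + y ^ 2) + z ^ 2) ^ ((3 : ℝ) / 2) := by
  have hb0 : (0:ℝ) < z ^ 2 := by positivity
  have hs0 : (0:ℝ) < (x ^ 2 + y ^ 2) + z ^ 2 := by positivity
  have hd0 : (0:ℝ) < β₁ - β₃ := by linarith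
  have ha0 : (x ^ 2 + y ^ 2) ≠ 0 := ne_of_gt hρ
  have hsne : ((x ^ 2 + y ^ 2) + z ^ 2) ≠ 0 := ne_of_gt hs0
  have h1 : β - β₁ = -((x ^ 2 + y ^ 2) * (β₁ - β₃) / ((x ^ 2 + y ^ 2) + z ^ 2)) := by
    rw [hβ]; field_simp; ring
  have h2 : β - β₃ = z ^ 2 * (β₁ - β₃) / ((x ^ 2 + y ^ 2) + z ^ 2) := by
    rw [hβ]; field_simp; ring
  have hX : 0 < (x ^ 2 + y ^ 2) * (β₁ - β₃) / ((x ^ 2 + y ^ 2) + z ^ 2) := by positivity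
  have hY : 0 < z ^ 2 * (β₁ - β₃) / ((x ^ 2 + y ^ 2) + z ^ 2) := by positivity
  refine ⟨by rw [h1, h2]; field_simp; ring, by linarith, by linarith, ?_⟩
  set S := Real.sqrt ((x ^ 2 + y ^ 2) + z ^ 2) with hS
  set A := Real.sqrt (β₁ - β₃) with hA
  have hS2 : S ^ 2 = (x ^ 2 + y ^ 2) + z ^ 2 := Real.sq_sqrt hs0.le
  have hA2 : A ^ 2 = β₁ - β₃ := Real.sq_sqrt hd0.le
  have hSpos : 0 < S := Real.sqrt_pos.mpr hs0
  have hApos : 0 < A := Real.sqrt_pos.mpr hd0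
  have hzabs : 0 < |z| := abs_pos.mpr hz
  have habs : |β - β₁| = (x ^ 2 + y ^ 2) * (β₁ - β₃) / ((x ^ 2 + y ^ 2) + z ^ 2) := by
    rw [h1, abs_neg, abs_of_pos hX]
  have hsq : Real.sqrt (β - β₃) = |z| * A / S := by
    have h3 : (|z| * A / S) ^ 2 = z ^ 2 * (β₁ - β₃) / ((x ^ 2 + y ^ 2) + z ^ 2) := by
      rw [div_pow, mul_pow, sq_abs, hA2, hS2]
    rw [h2, ← h3, Real.sqrt_sq (by positivity)]
  have hrpow : ((x ^ 2 + y ^ 2) + z ^ 2) ^ ((3:ℝ)/2) = S ^ 3 := by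
    rw [show ((3:ℝ)/2) = (1/2 : ℝ) * (3:ℕ) by norm_num, Real.rpow_mul hs0.le,
      Real.rpow_natCast, ← Real.sqrt_eq_rpow]
  rw [habs, hsq, h1, h2, hrpow, ← hA2, ← hS2, show z ^ 2 = |z| ^ 2 from (sq_abs z).symm]
  exact bgpp_key _ _ _ _ hρ hApos hzabs hSpos (by rw [hS2, sq_abs])
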